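/- For all ξ, η ∈ 𝓘 one has a(ξ, η) ∈ 𝓕. Moreover, for all natural numbers d, e and all x ∈ Q, deg a(t^d·ε, x·t^e·ε) ≤ d + e + 1; and if deg a(t^d·ε, x·t^e·ε) < d + e + 1, then x ∈ K. -/

import Mathlib

open scoped TensorProduct

/-- `f` is a Laurent polynomial: a finite sum `Σ y_z · t^z` with `y_z ∈ K`. -/
def IsLaurent {K : Type} [Field K] (f : RatFunc K) : Prop :=
  ∃ c : ℤ →₀ K, f = c.sum fun z y => algebraMap K (RatFunc K) y * RatFunc.X ^ z

/-- `f` is a Laurent polynomial of degree at most `n` (degree = max |z| over nonzero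
coefficients; `deg 0 = -∞`). -/
def LaurentDegLE {K : Type} [Field K] (f : RatFunc K) (n : ℕ) : Prop :=
  ∃ c : ℤ →₀ K, (∀ z : ℤ, c z ≠ 0 → |z| ≤ (n : ℤ)) ∧
    f = c.sum fun z y => algebraMap K (RatFunc K) y * RatFunc.X ^ z

/-- The value `a(f·ε, g·ε) = u·(σ(f)·g − f·σ(g))` of the alternating form `a` on `I`,
expressed through the unique representations `f·ε`, `g·ε` of its arguments. -/
noncomputable def aForm {K : Type} [Field K] (σ : RatFunc K ≃+* RatFunc K) (u : K)
    (f g : RatFunc K) : RatFunc K :=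
  algebraMap K (RatFunc K) u * (σ f * g - f * σ g)

namespace DBAux

variable {K : Type} [Field K]

noncomputable def lmon (y : K) (z : ℤ) : RatFunc K :=
  algebraMap K (RatFunc K) y * RatFunc.X ^ z

lemma lmon_congr {y y' : K} {z z' : ℤ} (h1 : y = y') (h2 : z = z') :
    lmon y z = lmon y' z' := by rw [h1, h2]

noncomputable def Lmap : (ℤ →₀ K) →+ RatFunc K :=
  Finsupp.liftAddHom fun z =>
    (AddMonoidHom.mulRight ((RatFunc.X : RatFunc K) ^ z)).comp
      (algebraMap K (RatFunc K)).toAddMonoidHom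

lemma Lmap_apply (c : ℤ →₀ K) :
    Lmap c = c.sum fun z y => algebraMap K (RatFunc K) y * RatFunc.X ^ z := rfl

lemma Lmap_single (z : ℤ) (y : K) : Lmap (Finsupp.single z y) = lmon y z := by
  rw [Lmap, Finsupp.liftAddHom_apply_single]
  rfl

lemma isLaurent_iff (f : RatFunc K) : IsLaurent f ↔ ∃ c : ℤ →₀ K, f = Lmap c := Iff.rfl

lemma lmon_mul (y y' : K) (z z' : ℤ) : lmon y z * lmon y' z' = lmon (y * y') (z + z') := by
  simp only [lmon, map_mul, zpow_add₀ (RatFunc.X_ne_zero (K := K))]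
  ring

lemma isLaurent_lmon (y : K) (z : ℤ) : IsLaurent (lmon y z) :=
  ⟨Finsupp.single z y, (Lmap_single z y).symm⟩

lemma isLaurent_zero : IsLaurent (0 : RatFunc K) := ⟨0, by simp⟩

lemma isLaurent_add {f g : RatFunc K} (hf : IsLaurent f) (hg : IsLaurent g) :
    IsLaurent (f + g) := by
  obtain ⟨c, rfl⟩ := hf; obtain ⟨c', rfl⟩ := hg
  exact ⟨c + c', (map_add Lmap c c').symm⟩

lemma isLaurent_neg {f : RatFunc K} (hf : IsLaurent f) : IsLaurent (-f) := by
  obtain ⟨c, rfl⟩ := hf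
  exact ⟨-c, (map_neg Lmap c).symm⟩

lemma isLaurent_sub {f g : RatFunc K} (hf : IsLaurent f) (hg : IsLaurent g) :
    IsLaurent (f - g) := by
  rw [sub_eq_add_neg]; exact isLaurent_add hf (isLaurent_neg hg)

lemma isLaurent_sum {α : Type*} (s : Finset α) (F : α → RatFunc K)
    (h : ∀ i ∈ s, IsLaurent (F i)) : IsLaurent (∑ i ∈ s, F i) := by
  classical
  induction s using Finset.induction_on with
  | empty => simpa using isLaurent_zero
  | insert a s hx ih =>
    rw [Finset.sum_insert hx]
    exact isLaurent_add (h a (by simp)) (ih fun i hi => h i (by simp [hi]))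

lemma isLaurent_lmon_mul {g : RatFunc K} (y : K) (z : ℤ) (hg : IsLaurent g) :
    IsLaurent (lmon y z * g) := by
  obtain ⟨c, rfl⟩ := hg
  rw [Finsupp.mul_sum]
  refine isLaurent_sum _ _ fun w hw => ?_
  show IsLaurent (lmon y z * (algebraMap K (RatFunc K) (c w) * RatFunc.X ^ w))
  have : lmon y z * (algebraMap K (RatFunc K) (c w) * RatFunc.X ^ w) = lmon (y * c w) (z + w) := by
    rw [← lmon_mul]; rfl
  rw [this]
  exact isLaurent_lmon _ _

lemma isLaurent_mul {f g : RatFunc K} (hf : IsLaurent f) (hg : IsLaurent g) :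
    IsLaurent (f * g) := by
  obtain ⟨c, rfl⟩ := hf
  rw [Finsupp.sum_mul]
  refine isLaurent_sum _ _ fun w hw => ?_
  exact isLaurent_lmon_mul _ _ hg

lemma Lmap_injective : Function.Injective (Lmap (K := K)) := by
  rw [injective_iff_map_eq_zero]
  intro c hc
  ext z0
  simp only [Finsupp.coe_zero, Pi.zero_apply]
  by_contra hz0
  have hz0' : z0 ∈ c.support := Finsupp.mem_support_iff.2 hz0
  set N : ℤ := ∑ z ∈ c.support, |z| with hN
  have hNz : ∀ z ∈ c.support, 0 ≤ z + N := by
    intro z hz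
    have h1 : |z| ≤ N := Finset.single_le_sum (fun i _ => abs_nonneg i) hz
    have h2 := neg_abs_le z
    linarith
  set P : Polynomial K := ∑ z ∈ c.support, Polynomial.C (c z) * Polynomial.X ^ (z + N).toNat
    with hP
  have hPmap : algebraMap (Polynomial K) (RatFunc K) P = RatFunc.X ^ N * Lmap c := by
    rw [hP, map_sum, Lmap_apply, Finsupp.sum, Finset.mul_sum]
    refine Finset.sum_congr rfl fun z hz => ?_
    rw [map_mul, map_pow, RatFunc.algebraMap_C, RatFunc.algebraMap_X,
      ← zpow_natCast (RatFunc.X : RatFunc K) ((z + N).toNat), Int.toNat_of_nonneg (hNz z hz),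
      zpow_add₀ (RatFunc.X_ne_zero (K := K)), RatFunc.algebraMap_eq_C]
    ring
  have hP0 : P = 0 := by
    apply RatFunc.algebraMap_injective K
    rw [hPmap, hc, mul_zero, map_zero]
  have hcoeff : P.coeff (z0 + N).toNat = c z0 := by
    rw [hP, Polynomial.finset_sum_coeff]
    rw [Finset.sum_eq_single z0]
    · simp [Polynomial.coeff_C_mul, Polynomial.coeff_X_pow]
    · intro z hz hne
      simp only [Polynomial.coeff_C_mul, Polynomial.coeff_X_pow]
      rw [if_neg, mul_zero]
      intro h
      apply hne
      have := Int.toNat_of_nonneg (hNz z hz)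
      have := Int.toNat_of_nonneg (hNz z0 hz0')
      omega
    · intro h; exact absurd hz0' h
  rw [hP0] at hcoeff
  simp at hcoeff
  exact hz0 hcoeff.symm

section Sigma

variable (σ : RatFunc K ≃+* RatFunc K) (ι : K → K) (bb : K)
variable (hσK : ∀ x : K, σ (algebraMap K (RatFunc K) x) = algebraMap K (RatFunc K) (ι x))
variable (hσX : σ RatFunc.X = algebraMap K (RatFunc K) bb * RatFunc.X⁻¹)
variable (hbb : bb ≠ 0)

include hσX in
lemma sigma_zpow (z : ℤ) :
    σ ((RatFunc.X : RatFunc K) ^ z) = algebraMap K (RatFunc K) (bb ^ z) * RatFunc.X ^ (-z) := by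
  rw [map_zpow₀ σ, hσX, mul_zpow, map_zpow₀ (algebraMap K (RatFunc K)), inv_zpow, ← zpow_neg]

include hσK hσX in
lemma sigma_lmon (y : K) (z : ℤ) : σ (lmon y z) = lmon (ι y * bb ^ z) (-z) := by
  rw [lmon, map_mul, hσK, sigma_zpow σ bb hσX, lmon, map_mul, mul_assoc]

include hσK hσX hbb in
lemma sigma_sigma_lmon (hιm : ∀ x y : K, ι (x * y) = ι x * ι y)
    (hι2 : ∀ x : K, ι (ι x) = x) (hιz : ∀ z : ℤ, ι (bb ^ z) = bb ^ z)
    (y : K) (z : ℤ) : σ (σ (lmon y z)) = lmon y z := by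
  rw [sigma_lmon σ ι bb hσK hσX, sigma_lmon σ ι bb hσK hσX, neg_neg]
  congr 1
  rw [hιm, hι2, hιz, mul_assoc, ← zpow_add₀ hbb, add_neg_cancel, zpow_zero, mul_one]

include hσK hσX in
lemma isLaurent_sigma {f : RatFunc K} (hf : IsLaurent f) : IsLaurent (σ f) := by
  obtain ⟨c, rfl⟩ := hf
  rw [map_finsuppSum]
  refine isLaurent_sum _ _ fun w hw => ?_
  show IsLaurent (σ (lmon (c w) w))
  rw [sigma_lmon σ ι bb hσK hσX]
  exact isLaurent_lmon _ _

include hσK hσX hbb in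
lemma sigma_sigma_laurent (hιm : ∀ x y : K, ι (x * y) = ι x * ι y)
    (hι2 : ∀ x : K, ι (ι x) = x) (hιz : ∀ z : ℤ, ι (bb ^ z) = bb ^ z)
    {f : RatFunc K} (hf : IsLaurent f) : σ (σ f) = f := by
  obtain ⟨c, rfl⟩ := hf
  rw [map_finsuppSum, map_finsuppSum]
  refine Finsupp.sum_congr fun w hw => ?_
  show σ (σ (lmon (c w) w)) = lmon (c w) w
  exact sigma_sigma_lmon σ ι bb hσK hσX hbb hιm hι2 hιz _ _

include hσK hσX in
lemma aForm_lmon (u y w : K) (zy zw : ℤ) :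
    aForm σ u (lmon y zy) (lmon w zw)
      = lmon (u * (ι y * bb ^ zy * w)) (zw - zy)
        - lmon (u * (y * (ι w * bb ^ zw))) (zy - zw) := by
  rw [aForm, sigma_lmon σ ι bb hσK hσX, sigma_lmon σ ι bb hσK hσX, lmon_mul, lmon_mul,
    show algebraMap K (RatFunc K) u = lmon u 0 by simp [lmon], mul_sub, lmon_mul, lmon_mul]
  congr 1
  · exact lmon_congr rfl (by ring)
  · exact lmon_congr rfl (by ring)

end Sigma

lemma aForm_add_right (σ : RatFunc K ≃+* RatFunc K) (u : K) (f g₁ g₂ : RatFunc K) :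
    aForm σ u f (g₁ + g₂) = aForm σ u f g₁ + aForm σ u f g₂ := by
  simp only [aForm, map_add]
  ring

end DBAux

theorem degree_bound_for_a
    -- k is a field, K/k a degree-2 Galois extension with nontrivial automorphism ι,
    -- b a nonzero element of k
    (k K : Type) [Field k] [Field K] [Algebra k K]
    (hrank : Module.finrank k K = 2)
    (ι : K ≃ₐ[k] K) (hι : ∃ x : K, ι x ≠ x)
    (hι2 : ∀ x : K, ι (ι x) = x)
    (hfix : ∀ x : K, ι x = x → ∃ c : k, algebraMap k K c = x)
    (b : k) (hb : b ≠ 0)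
    -- Q = (K, ι, b) is the crossed-product quaternion k-algebra, a division ring,
    -- containing K via φ, with j·j = b, j·x = ι(x)·j, and Q = K ⊕ K·j
    (Q : Type) [DivisionRing Q] [Algebra k Q]
    (φ : K →ₐ[k] Q) (j : Q)
    (hj2 : j * j = algebraMap k Q b)
    (hjx : ∀ x : K, j * φ x = φ (ι x) * j)
    (hQdec : ∀ q : Q, ∃! p : K × K, q = φ p.1 + φ p.2 * j)
    -- σ is the automorphism of K(t) acting as ι on K with σ(t) = b·t⁻¹
    (σ : RatFunc K ≃+* RatFunc K)
    (hσK : ∀ x : K, σ (algebraMap K (RatFunc K) x) = algebraMap K (RatFunc K) (ι x))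
    (hσt : σ RatFunc.X = algebraMap K (RatFunc K) (algebraMap k K b) * RatFunc.X⁻¹)
    -- Q_F = Q ⊗_k F, identified with K(t) ⊕ K(t)·j : it contains K(t) via ψ and an
    -- element J (the image of j) with J·J = b, J·ψ(f) = ψ(σ f)·J, Q_F = ψ(K(t)) ⊕ ψ(K(t))·J,
    -- and Q embeds via φ' compatibly with φ and j
    (QF : Type) [Ring QF]
    (ψ : RatFunc K →+* QF) (J : QF)
    (hJ2 : J * J = ψ (algebraMap K (RatFunc K) (algebraMap k K b)))
    (hJf : ∀ f : RatFunc K, J * ψ f = ψ (σ f) * J)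
    (hQFdec : ∀ q : QF, ∃! p : RatFunc K × RatFunc K, q = ψ p.1 + ψ p.2 * J)
    (φ' : Q →+* QF)
    (hφ'K : ∀ x : K, φ' (φ x) = ψ (algebraMap K (RatFunc K) x))
    (hφ'j : φ' j = J)
    -- u is a nonzero element of K with ι(u) = -u
    (u : K) (hu : u ≠ 0) (hιu : ι u = -u)
    -- ε = 1 + j·t⁻¹
    (ε : QF) (hε : ε = 1 + J * ψ RatFunc.X⁻¹) :
    -- a(ξ, η) ∈ 𝓕 for ξ = f·ε, η = g·ε ∈ 𝓘
    (∀ f g : RatFunc K, IsLaurent f → IsLaurent g →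
      IsLaurent (aForm σ u f g) ∧ σ (aForm σ u f g) = aForm σ u f g) ∧
    -- deg a(t^d·ε, x·t^e·ε) ≤ d+e+1, with x·t^e·ε = g·ε;
    -- and if deg a(t^d·ε, x·t^e·ε) < d+e+1 then x ∈ K
    (∀ (d e : ℕ) (x : Q) (g : RatFunc K),
      φ' x * (ψ (RatFunc.X ^ e) * ε) = ψ g * ε →
      LaurentDegLE (aForm σ u (RatFunc.X ^ d) g) (d + e + 1) ∧
      (LaurentDegLE (aForm σ u (RatFunc.X ^ d) g) (d + e) → ∃ y : K, x = φ y)) := by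
  classical
  set bb : K := algebraMap k K b with hbbdef
  have hbb : bb ≠ 0 := by
    rw [hbbdef]
    exact (map_ne_zero_iff _ (algebraMap k K).injective).mpr hb
  have hιbb : ι bb = bb := ι.commutes b
  have hιm : ∀ x y : K, ι (x * y) = ι x * ι y := map_mul ι
  have hιz : ∀ z : ℤ, ι (bb ^ z) = bb ^ z := fun z => by rw [map_zpow₀ ι, hιbb]
  constructor
  · intro f g hf hg
    have hσf := DBAux.isLaurent_sigma σ (⇑ι) bb hσK hσt hf
    have hσg := DBAux.isLaurent_sigma σ (⇑ι) bb hσK hσt hg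
    constructor
    · have hrw : aForm σ u f g = DBAux.lmon u 0 * (σ f * g - f * σ g) := by
        rw [aForm]; congr 1; simp [DBAux.lmon]
      rw [hrw]
      exact DBAux.isLaurent_lmon_mul _ _
        (DBAux.isLaurent_sub (DBAux.isLaurent_mul hσf hg) (DBAux.isLaurent_mul hf hσg))
    · rw [aForm, map_mul, map_sub, map_mul, map_mul,
        DBAux.sigma_sigma_laurent σ (⇑ι) bb hσK hσt hbb hιm hι2 hιz hf,
        DBAux.sigma_sigma_laurent σ (⇑ι) bb hσK hσt hbb hιm hι2 hιz hg,
        hσK u, hιu, map_neg]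
      ring
  · intro d e x g heq
    obtain ⟨⟨x₀, x₁⟩, hx, -⟩ := hQdec x
    simp only at hx
    have huniq : ∀ p q : RatFunc K × RatFunc K,
        ψ p.1 + ψ p.2 * J = ψ q.1 + ψ q.2 * J → p = q := by
      intro p q h
      obtain ⟨r, _, hr⟩ := hQFdec (ψ q.1 + ψ q.2 * J)
      exact (hr p h.symm).trans (hr q rfl).symm
    have hσXinv : σ (RatFunc.X)⁻¹ = algebraMap K (RatFunc K) bb⁻¹ * RatFunc.X := by
      rw [map_inv₀, hσt, mul_inv, inv_inv, ← map_inv₀]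
    have hε' : ε = ψ 1 + ψ (algebraMap K (RatFunc K) bb⁻¹ * RatFunc.X) * J := by
      rw [hε, hJf, hσXinv, map_one]
    have hmul : ∀ a₁ a₂ c₁ c₂ : RatFunc K,
        (ψ a₁ + ψ a₂ * J) * (ψ c₁ + ψ c₂ * J)
          = ψ (a₁ * c₁ + a₂ * σ c₂ * algebraMap K (RatFunc K) bb)
            + ψ (a₁ * c₂ + a₂ * σ c₁) * J := by
      intro a₁ a₂ c₁ c₂
      have e1 : J * ψ c₁ = ψ (σ c₁) * J := hJf c₁
      have e2 : J * ψ c₂ = ψ (σ c₂) * J := hJf c₂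
      calc (ψ a₁ + ψ a₂ * J) * (ψ c₁ + ψ c₂ * J)
          = ψ a₁ * ψ c₁ + ψ a₁ * (ψ c₂ * J)
            + (ψ a₂ * (J * ψ c₁) + ψ a₂ * ((J * ψ c₂) * J)) := by noncomm_ring
        _ = ψ (a₁ * c₁ + a₂ * σ c₂ * algebraMap K (RatFunc K) bb)
            + ψ (a₁ * c₂ + a₂ * σ c₁) * J := by
            rw [e1, e2, mul_assoc (ψ (σ c₂)) J J, hJ2]
            simp only [map_add, map_mul]
            noncomm_ring
    have hφ'x : φ' x = ψ (algebraMap K (RatFunc K) x₀) + ψ (algebraMap K (RatFunc K) x₁) * J := by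
      rw [hx, map_add, map_mul, hφ'K, hφ'K, hφ'j]
    have hXe : ψ ((RatFunc.X : RatFunc K) ^ e) * ε
        = ψ (RatFunc.X ^ e)
          + ψ (RatFunc.X ^ e * (algebraMap K (RatFunc K) bb⁻¹ * RatFunc.X)) * J := by
      calc ψ ((RatFunc.X : RatFunc K) ^ e) * ε
          = (ψ (RatFunc.X ^ e) + ψ 0 * J)
            * (ψ 1 + ψ (algebraMap K (RatFunc K) bb⁻¹ * RatFunc.X) * J) := by rw [hε']; simp
        _ = ψ (RatFunc.X ^ e * 1
              + 0 * σ (algebraMap K (RatFunc K) bb⁻¹ * RatFunc.X) * algebraMap K (RatFunc K) bb)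
            + ψ (RatFunc.X ^ e * (algebraMap K (RatFunc K) bb⁻¹ * RatFunc.X) + 0 * σ 1) * J :=
            hmul _ _ _ _
        _ = _ := by rw [mul_one, zero_mul, zero_mul, add_zero, zero_mul, add_zero]
    have hRHS : ψ g * ε = ψ g + ψ (g * (algebraMap K (RatFunc K) bb⁻¹ * RatFunc.X)) * J := by
      calc ψ g * ε
          = (ψ g + ψ 0 * J) * (ψ 1 + ψ (algebraMap K (RatFunc K) bb⁻¹ * RatFunc.X) * J) := by
            rw [hε']; simp
        _ = ψ (g * 1
              + 0 * σ (algebraMap K (RatFunc K) bb⁻¹ * RatFunc.X) * algebraMap K (RatFunc K) bb)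
            + ψ (g * (algebraMap K (RatFunc K) bb⁻¹ * RatFunc.X) + 0 * σ 1) * J := hmul _ _ _ _
        _ = _ := by rw [mul_one, zero_mul, zero_mul, add_zero, zero_mul, add_zero]
    have hLHS : φ' x * (ψ (RatFunc.X ^ e) * ε)
        = ψ (algebraMap K (RatFunc K) x₀ * RatFunc.X ^ e
            + algebraMap K (RatFunc K) x₁
              * σ (RatFunc.X ^ e * (algebraMap K (RatFunc K) bb⁻¹ * RatFunc.X))
              * algebraMap K (RatFunc K) bb)
          + ψ (algebraMap K (RatFunc K) x₀
                * (RatFunc.X ^ e * (algebraMap K (RatFunc K) bb⁻¹ * RatFunc.X))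
              + algebraMap K (RatFunc K) x₁ * σ (RatFunc.X ^ e)) * J := by
      rw [hφ'x, hXe]; exact hmul _ _ _ _
    have hpair := huniq
      (algebraMap K (RatFunc K) x₀ * RatFunc.X ^ e
          + algebraMap K (RatFunc K) x₁
            * σ (RatFunc.X ^ e * (algebraMap K (RatFunc K) bb⁻¹ * RatFunc.X))
            * algebraMap K (RatFunc K) bb,
        algebraMap K (RatFunc K) x₀ * (RatFunc.X ^ e * (algebraMap K (RatFunc K) bb⁻¹ * RatFunc.X))
          + algebraMap K (RatFunc K) x₁ * σ (RatFunc.X ^ e))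
      (g, g * (algebraMap K (RatFunc K) bb⁻¹ * RatFunc.X))
      ((hLHS.symm.trans heq).trans hRHS)
    have hg1 : algebraMap K (RatFunc K) x₀ * RatFunc.X ^ e
        + algebraMap K (RatFunc K) x₁
          * σ (RatFunc.X ^ e * (algebraMap K (RatFunc K) bb⁻¹ * RatFunc.X))
          * algebraMap K (RatFunc K) bb = g := congrArg Prod.fst hpair
    have hXeC : (RatFunc.X : RatFunc K) ^ e * (algebraMap K (RatFunc K) bb⁻¹ * RatFunc.X)
        = DBAux.lmon bb⁻¹ ((e : ℤ) + 1) := by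
      rw [DBAux.lmon, zpow_add₀ (RatFunc.X_ne_zero (K := K)), zpow_natCast, zpow_one]; ring
    have hCx₀Xe : algebraMap K (RatFunc K) x₀ * RatFunc.X ^ e = DBAux.lmon x₀ (e : ℤ) := by
      rw [DBAux.lmon, zpow_natCast]
    have hterm : algebraMap K (RatFunc K) x₁ * σ (DBAux.lmon bb⁻¹ ((e : ℤ) + 1))
        * algebraMap K (RatFunc K) bb
        = DBAux.lmon (x₁ * bb ^ ((e : ℤ) + 1)) (-((e : ℤ) + 1)) := by
      rw [DBAux.sigma_lmon σ (⇑ι) bb hσK hσt,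
        show algebraMap K (RatFunc K) x₁ = DBAux.lmon x₁ 0 by simp [DBAux.lmon],
        show algebraMap K (RatFunc K) bb = DBAux.lmon bb 0 by simp [DBAux.lmon],
        DBAux.lmon_mul, DBAux.lmon_mul]
      refine DBAux.lmon_congr ?_ (by ring)
      rw [map_inv₀, hιbb]
      field_simp
    rw [hXeC, hCx₀Xe, hterm] at hg1
    have hXd : (RatFunc.X : RatFunc K) ^ d = DBAux.lmon 1 (d : ℤ) := by
      simp [DBAux.lmon, zpow_natCast]
    have key : aForm σ u (RatFunc.X ^ d) g
        = DBAux.Lmap ((Finsupp.single ((e : ℤ) - (d : ℤ)) (u * (ι 1 * bb ^ (d : ℤ) * x₀))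
            - Finsupp.single ((d : ℤ) - (e : ℤ)) (u * (1 * (ι x₀ * bb ^ (e : ℤ)))))
          + (Finsupp.single (-((e : ℤ) + 1) - (d : ℤ))
                (u * (ι 1 * bb ^ (d : ℤ) * (x₁ * bb ^ ((e : ℤ) + 1))))
            - Finsupp.single ((d : ℤ) - -((e : ℤ) + 1))
                (u * (1 * (ι (x₁ * bb ^ ((e : ℤ) + 1)) * bb ^ (-((e : ℤ) + 1))))))) := by
      rw [hXd, ← hg1, DBAux.aForm_add_right,
        DBAux.aForm_lmon σ (⇑ι) bb hσK hσt,
        DBAux.aForm_lmon σ (⇑ι) bb hσK hσt,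
        map_add DBAux.Lmap, map_sub, map_sub, DBAux.Lmap_single, DBAux.Lmap_single,
        DBAux.Lmap_single, DBAux.Lmap_single]
    rw [DBAux.Lmap_apply] at key
    constructor
    · refine ⟨_, ?_, key⟩
      intro z hz
      by_contra hgt
      push_neg at hgt
      apply hz
      rcases lt_abs.mp hgt with h | h <;>
      · push_cast at h
        have h1 : ¬((e : ℤ) - (d : ℤ) = z) := by omega
        have h2 : ¬((d : ℤ) - (e : ℤ) = z) := by omega
        have h3 : ¬(-((e : ℤ) + 1) - (d : ℤ) = z) := by omega
        have h4 : ¬((d : ℤ) - -((e : ℤ) + 1) = z) := by omega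
        simp only [Finsupp.add_apply, Finsupp.sub_apply, Finsupp.single_apply,
          if_neg h1, if_neg h2, if_neg h3, if_neg h4]
        norm_num
    · intro hdeg
      obtain ⟨c', hb', hc'⟩ := hdeg
      have hcc := DBAux.Lmap_injective
        (a₁ := (Finsupp.single ((e : ℤ) - (d : ℤ)) (u * (ι 1 * bb ^ (d : ℤ) * x₀))
            - Finsupp.single ((d : ℤ) - (e : ℤ)) (u * (1 * (ι x₀ * bb ^ (e : ℤ)))))
          + (Finsupp.single (-((e : ℤ) + 1) - (d : ℤ))
                (u * (ι 1 * bb ^ (d : ℤ) * (x₁ * bb ^ ((e : ℤ) + 1))))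
            - Finsupp.single ((d : ℤ) - -((e : ℤ) + 1))
                (u * (1 * (ι (x₁ * bb ^ ((e : ℤ) + 1)) * bb ^ (-((e : ℤ) + 1)))))))
        (a₂ := c') (key.symm.trans hc')
      have hzero : c' ((d : ℤ) - -((e : ℤ) + 1)) = 0 := by
        by_contra hne
        have h5 := hb' _ hne
        rw [abs_of_nonneg (by omega)] at h5
        push_cast at h5
        omega
      have h1 : ¬((e : ℤ) - (d : ℤ) = (d : ℤ) - -((e : ℤ) + 1)) := by omega
      have h2 : ¬((d : ℤ) - (e : ℤ) = (d : ℤ) - -((e : ℤ) + 1)) := by omega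
      have h3 : ¬(-((e : ℤ) + 1) - (d : ℤ) = (d : ℤ) - -((e : ℤ) + 1)) := by omega
      have hA4 := DFunLike.congr_fun hcc ((d : ℤ) - -((e : ℤ) + 1))
      rw [hzero] at hA4
      simp only [Finsupp.add_apply, Finsupp.sub_apply, Finsupp.single_apply,
        if_neg h1, if_neg h2, if_neg h3, if_pos rfl, zero_sub, zero_add,
        neg_eq_zero, one_mul] at hA4
      norm_num at hA4
      have hx₁ : x₁ = 0 := by
        rcases hA4 with h | (h | h) | h
        · exact absurd h hu
        · exact h
        · rw [hιbb] at h; exact absurd h (zpow_ne_zero _ hbb)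
        · exact absurd h (zpow_ne_zero _ hbb)
      exact ⟨x₀, by rw [hx, hx₁, map_zero, zero_mul, add_zero]⟩
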